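/- Let k ≥ 2 be an integer and δ ≥ 1 be an odd integer, and let G = K_δ ∨ (⌊(2k+1)δ/2⌋ + 1)·K_1, the join of a complete graph on δ vertices with ⌊(2k+1)δ/2⌋ + 1 isolated vertices, and let n be the order of G. Then: (i) the minimum degree of G equals δ; (ii) 2n = (2k+3)δ + 1, so that (2k+3)·δ = 2n − 1; and (iii) there exists a subset S ⊆ V(G) (namely S = V(K_δ), with |S| = δ) such that 2·i(G−S) > (2k+1)·|S|. -/

import Mathlib

/-- The number of isolated vertices of the induced subgraph `G − S`:
vertices outside `S` having no neighbor outside `S`. -/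
def isoCount {V : Type*} [Fintype V] [DecidableEq V] (G : SimpleGraph V)
    [DecidableRel G.Adj] (S : Finset V) : ℕ :=
  (Finset.univ.filter (fun v => v ∉ S ∧ ∀ w, w ∉ S → ¬ G.Adj v w)).card

/-- Rank of a vertex of `K_t ∨ (K_a ∪ b·K_1)`: `0` on `K_t`, `1` on `K_a`, `2` on the
isolated part. -/
def rnk {t a b : ℕ} : Fin t ⊕ (Fin a ⊕ Fin b) → ℕ
  | Sum.inl _ => 0
  | Sum.inr (Sum.inl _) => 1
  | Sum.inr (Sum.inr _) => 2

/-- The join `K_t ∨ (K_a ∪ b·K_1)`: every vertex of `K_t` is adjacent to all other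
vertices, and the vertices of `K_a` are moreover pairwise adjacent.
(`K_t ∨ b·K_1` is the case `a = 0`.) -/
def joinGraph (t a b : ℕ) : SimpleGraph (Fin t ⊕ (Fin a ⊕ Fin b)) where
  Adj u v := u ≠ v ∧ (rnk u = 0 ∨ rnk v = 0 ∨ (rnk u = 1 ∧ rnk v = 1))
  symm := ⟨by rintro u v ⟨h1, h2⟩; exact ⟨h1.symm, by tauto⟩⟩
  loopless := ⟨by rintro u ⟨h, -⟩; exact h rfl⟩

instance (t a b : ℕ) : DecidableRel (joinGraph t a b).Adj := fun u v =>
  decidable_of_iff (u ≠ v ∧ (rnk u = 0 ∨ rnk v = 0 ∨ (rnk u = 1 ∧ rnk v = 1))) Iff.rfl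


lemma deg_inl (t b : ℕ) (u : Fin t) :
    (joinGraph t 0 b).degree (Sum.inl u) = t + b - 1 := by
  have h : (joinGraph t 0 b).neighborFinset (Sum.inl u) = Finset.univ.erase (Sum.inl u) := by
    ext w
    rw [SimpleGraph.mem_neighborFinset]
    simp [SimpleGraph.mem_neighborFinset, joinGraph, rnk, ne_comm]
  rw [SimpleGraph.degree, h, Finset.card_erase_of_mem (Finset.mem_univ _), Finset.card_univ]
  simp

lemma deg_inr (t b : ℕ) (u : Fin b) :
    (joinGraph t 0 b).degree (Sum.inr (Sum.inr u)) = t := by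
  have h : (joinGraph t 0 b).neighborFinset (Sum.inr (Sum.inr u))
      = Finset.univ.map ⟨Sum.inl, Sum.inl_injective⟩ := by
    ext w
    rw [SimpleGraph.mem_neighborFinset]
    rcases w with x | (x | x) <;>
      simp [SimpleGraph.mem_neighborFinset, joinGraph, rnk]
  rw [SimpleGraph.degree, h]
  simp

/-- **Remark 4.1.** For `k ≥ 2` and odd `δ ≥ 1`, the graph
`G = K_δ ∨ (⌊(2k+1)δ/2⌋ + 1)·K_1` of order `n` satisfies: (i) its minimum degree equals
`δ`; (ii) `2n = (2k+3)δ + 1`; and (iii) there is a vertex subset `S` with `|S| = δ`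
(namely `V(K_δ)`) such that `2·i(G−S) > (2k+1)·|S|`. -/
theorem stmt15 (k δ : ℕ) (hk : 2 ≤ k) (hδ1 : 1 ≤ δ) (hδodd : Odd δ) :
    ((∀ v, δ ≤ (joinGraph δ 0 (((2 * k + 1) * δ) / 2 + 1)).degree v)
      ∧ (∃ v, (joinGraph δ 0 (((2 * k + 1) * δ) / 2 + 1)).degree v = δ))
    ∧ 2 * Fintype.card (Fin δ ⊕ (Fin 0 ⊕ Fin (((2 * k + 1) * δ) / 2 + 1)))
        = (2 * k + 3) * δ + 1
    ∧ ∃ S : Finset (Fin δ ⊕ (Fin 0 ⊕ Fin (((2 * k + 1) * δ) / 2 + 1))),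
        S.card = δ ∧
        (2 * k + 1) * S.card
          < 2 * isoCount (joinGraph δ 0 (((2 * k + 1) * δ) / 2 + 1)) S := by
  obtain ⟨m, hm⟩ : Odd ((2 * k + 1) * δ) := (odd_two_mul_add_one k).mul hδodd
  have hdiv : ((2 * k + 1) * δ) / 2 = m := by omega
  set b : ℕ := ((2 * k + 1) * δ) / 2 + 1 with hb
  refine ⟨⟨?_, ?_⟩, ?_, ?_⟩
  · rintro (x | (x | x))
    · rw [deg_inl]; omega
    · exact x.elim0
    · rw [deg_inr]
  · exact ⟨Sum.inr (Sum.inr ⟨0, by omega⟩), deg_inr δ b _⟩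
  · have h2 : (2 * k + 3) * δ = (2 * k + 1) * δ + 2 * δ := by ring
    simp only [Fintype.card_sum, Fintype.card_fin]
    omega
  · refine ⟨Finset.univ.map ⟨Sum.inl, Sum.inl_injective⟩, by simp, ?_⟩
    have hiso : isoCount (joinGraph δ 0 b) (Finset.univ.map ⟨Sum.inl, Sum.inl_injective⟩) = b := by
      have h : (Finset.univ.filter (fun v => v ∉ Finset.univ.map ⟨Sum.inl, Sum.inl_injective⟩ ∧
            ∀ w, w ∉ Finset.univ.map (⟨Sum.inl, Sum.inl_injective⟩ :
              Fin δ ↪ Fin δ ⊕ (Fin 0 ⊕ Fin b)) → ¬ (joinGraph δ 0 b).Adj v w))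
          = Finset.univ.map ⟨fun x : Fin b => Sum.inr (Sum.inr x),
              fun x y h => by simpa using h⟩ := by
        ext v
        rcases v with x | (x | x)
        · simp
        · exact x.elim0
        · simp only [Finset.mem_filter, Finset.mem_univ, true_and, Finset.mem_map,
            Function.Embedding.coeFn_mk]
          constructor
          · rintro -; exact ⟨x, rfl⟩
          · rintro -
            refine ⟨by simp, ?_⟩
            rintro (y | (y | y)) hw hadj
            · exact hw (by simp)
            · exact y.elim0
            · rcases hadj with ⟨-, h | h | ⟨h, -⟩⟩ <;> simp [rnk] at h
      rw [isoCount, h, Finset.card_map, Finset.card_univ, Fintype.card_fin]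
    rw [hiso, Finset.card_map, Finset.card_univ, Fintype.card_fin]
    omega
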